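/- Let X be a Banach space and M, N closed subspaces of X. If M and N have a common complement in X, then the annihilators M^⊥ and N^⊥ have a common complement in the dual space X*. -/

import Mathlib

/-- The annihilator of a subspace `M` of `X` in the continuous dual of `X`. -/
noncomputable def contAnnihilator {X : Type*} [NormedAddCommGroup X] [NormedSpace ℝ X]
    (M : Submodule ℝ X) : Submodule ℝ (X →L[ℝ] ℝ) where
  carrier := {f | ∀ x ∈ M, f x = 0}
  add_mem' := by intro f g hf hg x hx; simp [hf x hx, hg x hx]
  zero_mem' := by intro x hx; simp
  smul_mem' := by intro c f hf x hx; simp [hf x hx]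

lemma contAnnihilator_isClosed {X : Type*} [NormedAddCommGroup X] [NormedSpace ℝ X]
    (M : Submodule ℝ X) : IsClosed (contAnnihilator M : Set (X →L[ℝ] ℝ)) := by
  have : (contAnnihilator M : Set (X →L[ℝ] ℝ)) =
      ⋂ x ∈ M, {f : X →L[ℝ] ℝ | f x = 0} := by
    ext f; simp [contAnnihilator]
  rw [this]
  refine isClosed_biInter fun x _ => ?_
  exact isClosed_eq (ContinuousLinearMap.apply ℝ ℝ x).continuous continuous_const

lemma contAnnihilator_inf {X : Type*} [NormedAddCommGroup X] [NormedSpace ℝ X]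
    {p q : Submodule ℝ X} (h : p ⊔ q = ⊤) :
    contAnnihilator p ⊓ contAnnihilator q = ⊥ := by
  rw [eq_bot_iff]
  rintro f ⟨hfp, hfq⟩
  ext x
  have hx : x ∈ p ⊔ q := h ▸ Submodule.mem_top
  obtain ⟨a, ha, b, hb, rfl⟩ := Submodule.mem_sup.mp hx
  simp [hfp a ha, hfq b hb]

lemma contAnnihilator_sup {X : Type*} [NormedAddCommGroup X] [NormedSpace ℝ X]
    [CompleteSpace X] {p q : Submodule ℝ X} (h : IsCompl p q)
    (hp : IsClosed (p : Set X)) (hq : IsClosed (q : Set X)) :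
    contAnnihilator p ⊔ contAnnihilator q = ⊤ := by
  rw [eq_top_iff]
  intro f _
  set π : X →L[ℝ] X := p.subtypeL ∘L p.linearProjOfClosedCompl q h hp hq with hπ
  have hπp : ∀ x ∈ p, π x = x := fun x hx => by
    simp [hπ, Submodule.coe_continuous_linearProjOfClosedCompl', Submodule.projectionOnto_apply_left h ⟨x, hx⟩]
  have hπq : ∀ x ∈ q, π x = 0 := fun x hx => by
    simp [hπ, Submodule.coe_continuous_linearProjOfClosedCompl', Submodule.projectionOnto_apply_right h ⟨x, hx⟩]
  refine Submodule.mem_sup.mpr ⟨f - f ∘L π, fun x hx => ?_, f ∘L π, fun x hx => ?_, by abel⟩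
  · simp [hπp x hx]
  · simp [hπq x hx]

theorem stmt_6 {X : Type*} [NormedAddCommGroup X] [NormedSpace ℝ X] [CompleteSpace X]
    (M N : Submodule ℝ X) (hM : IsClosed (M : Set X)) (hN : IsClosed (N : Set X))
    (h : ∃ K : Submodule ℝ X, IsClosed (K : Set X) ∧
        M ⊓ K = ⊥ ∧ M ⊔ K = ⊤ ∧ N ⊓ K = ⊥ ∧ N ⊔ K = ⊤) :
    ∃ K : Submodule ℝ (X →L[ℝ] ℝ), IsClosed (K : Set (X →L[ℝ] ℝ)) ∧
      contAnnihilator M ⊓ K = ⊥ ∧ contAnnihilator M ⊔ K = ⊤ ∧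
      contAnnihilator N ⊓ K = ⊥ ∧ contAnnihilator N ⊔ K = ⊤ := by
  obtain ⟨K, hK, hMK1, hMK2, hNK1, hNK2⟩ := h
  have hcM : IsCompl M K := ⟨disjoint_iff.mpr hMK1, codisjoint_iff.mpr hMK2⟩
  have hcN : IsCompl N K := ⟨disjoint_iff.mpr hNK1, codisjoint_iff.mpr hNK2⟩
  exact ⟨contAnnihilator K, contAnnihilator_isClosed K,
    contAnnihilator_inf hMK2, contAnnihilator_sup hcM hM hK,
    contAnnihilator_inf hNK2, contAnnihilator_sup hcN hN hK⟩
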